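/- arXiv:1605.04499 — 2 statements merged into one kernel-verified Lean document; each statement's English description precedes it below -/
import Mathlib

section
/- Chain rule for the reversed operator ∂⁻ under left paravector translation: let Γ be a constant paravector, T_Γ : X ↦ ΓX left paravector multiplication on ℂ⁴, Γ⁻ = (α, −𝛃) the reverse of Γ = (α, 𝛃), and C : ℂ⁴ → ℂ × ℂ³ holomorphic. Then for all X, ∂⁻(C ∘ T_Γ)(X) = Γ⁻·(∂⁻C)(T_Γ X). -/
noncomputable section
open scoped BigOperators

abbrev Vec3 : Type := Fin 3 → ℂ
abbrev Pv : Type := ℂ × Vec3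

def dot3 (a b : Vec3) : ℂ := ∑ i, a i * b i

def cross3 (a b : Vec3) : Vec3 :=
  ![a 1 * b 2 - a 2 * b 1, a 2 * b 0 - a 0 * b 2, a 0 * b 1 - a 1 * b 0]

def pmul (A B : Pv) : Pv :=
  (A.1 * B.1 + dot3 A.2 B.2,
   fun j => A.1 * B.2 j + B.1 * A.2 j + Complex.I * cross3 A.2 B.2 j)

def detP (A : Pv) : ℂ := A.1 ^ 2 - dot3 A.2 A.2

def revP (A : Pv) : Pv := (A.1, -A.2)

abbrev CPt : Type := Fin 4 → ℂ

def toPv (X : CPt) : Pv := (X 0, fun i => X i.succ)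

def ofPv (A : Pv) : CPt := Fin.cons A.1 A.2

def cpd (i : Fin 4) (f : CPt → ℂ) (x : CPt) : ℂ := fderiv ℂ f x (Pi.single i 1)

def cdiv3 (Φ : CPt → Vec3) (x : CPt) : ℂ := ∑ i : Fin 3, cpd i.succ (fun y => Φ y i) x

def cgrad3 (f : CPt → ℂ) (x : CPt) : Vec3 := fun i => cpd i.succ f x

def ccurl3 (Φ : CPt → Vec3) (x : CPt) : Vec3 :=
  ![cpd 2 (fun y => Φ y 2) x - cpd 3 (fun y => Φ y 1) x,
    cpd 3 (fun y => Φ y 0) x - cpd 1 (fun y => Φ y 2) x,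
    cpd 1 (fun y => Φ y 1) x - cpd 2 (fun y => Φ y 0) x]

def Dc (A : CPt → Pv) (x : CPt) : Pv :=
  (cpd 0 (fun y => (A y).1) x + cdiv3 (fun y => (A y).2) x,
   fun j => cpd 0 (fun y => (A y).2 j) x + cgrad3 (fun y => (A y).1) x j
     + Complex.I * ccurl3 (fun y => (A y).2) x j)

def Dcm (A : CPt → Pv) (x : CPt) : Pv :=
  (cpd 0 (fun y => (A y).1) x - cdiv3 (fun y => (A y).2) x,
   fun j => cpd 0 (fun y => (A y).2 j) x - cgrad3 (fun y => (A y).1) x j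
     - Complex.I * ccurl3 (fun y => (A y).2) x j)

lemma cpd_comp (g : CPt → ℂ) (hg : Differentiable ℂ g) (L : CPt →L[ℂ] CPt)
    (i : Fin 4) (x : CPt) :
    cpd i (fun y => g (L y)) x = ∑ j, L (Pi.single i 1) j * cpd j g (L x) := by
  have h : fderiv ℂ (fun y => g (L y)) x = (fderiv ℂ g (L x)).comp (L : CPt →L[ℂ] CPt) := by
    have := fderiv_comp (𝕜 := ℂ) (x := x) (hg (L x)) L.differentiableAt
    simpa [L.fderiv, Function.comp_def] using this
  unfold cpd
  rw [h]
  simp only [ContinuousLinearMap.comp_apply]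
  have hv : L (Pi.single i 1) = ∑ j, (L (Pi.single i 1) j) • (Pi.single j 1 : CPt) := by
    funext k
    simp [Finset.sum_apply, Pi.single_apply]
  rw [hv, map_sum]
  simp [smul_eq_mul]
  simp [Pi.single_apply]
def Tlin (Γ : Pv) : CPt →L[ℂ] CPt :=
  LinearMap.toContinuousLinearMap
  { toFun := fun y => ofPv (pmul Γ (toPv y))
    map_add' := by
      intro y z
      funext i
      refine Fin.cases ?_ (fun k => ?_) i
      · simp [ofPv, pmul, toPv, dot3, cross3, Fin.sum_univ_three]; ring
      · simp only [ofPv, pmul, toPv, dot3, cross3, Fin.cons_succ, Pi.add_apply, Pi.smul_apply]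
        fin_cases k <;> simp [Fin.sum_univ_three, smul_eq_mul] <;> ring
    map_smul' := by
      intro c y
      funext i
      refine Fin.cases ?_ (fun k => ?_) i
      · simp [ofPv, pmul, toPv, dot3, cross3, Fin.sum_univ_three]; ring
      · simp only [ofPv, pmul, toPv, dot3, cross3, Fin.cons_succ, Pi.add_apply, Pi.smul_apply]
        fin_cases k <;> simp [Fin.sum_univ_three, smul_eq_mul] <;> ring }

lemma Tlin_apply (Γ : Pv) (y : CPt) : Tlin Γ y = ofPv (pmul Γ (toPv y)) := rfl
lemma consv1 (a : ℂ) (v : Vec3) : (Fin.cons a v : CPt) (1 : Fin 4) = v 0 := rfl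
lemma consv2 (a : ℂ) (v : Vec3) : (Fin.cons a v : CPt) (2 : Fin 4) = v 1 := rfl
lemma consv3 (a : ℂ) (v : Vec3) : (Fin.cons a v : CPt) (3 : Fin 4) = v 2 := rfl
lemma sc0 : (0:Fin 3).succ = (1:Fin 4) := rfl
lemma sc1 : (1:Fin 3).succ = (2:Fin 4) := rfl
lemma sc2 : (2:Fin 3).succ = (3:Fin 4) := rfl

theorem Dcm_left_translation (Γ : Pv) (C : CPt → Pv) (hC : Differentiable ℂ C) :
    ∀ x : CPt,
      Dcm (fun y => C (ofPv (pmul Γ (toPv y)))) x =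
        pmul (revP Γ) (Dcm C (ofPv (pmul Γ (toPv x)))) := by
  intro x
  have h1d : Differentiable ℂ (fun y => (C y).1) := hC.fst
  have h2d : ∀ k : Fin 3, Differentiable ℂ (fun y => (C y).2 k) := fun k =>
    differentiable_pi.mp hC.snd k
  have E1 : ∀ (i : Fin 4) (z : CPt),
      cpd i (fun y => (C (ofPv (pmul Γ (toPv y)))).1) z =
        ∑ j, (ofPv (pmul Γ (toPv (Pi.single i 1)))) j *
          cpd j (fun y => (C y).1) (ofPv (pmul Γ (toPv z))) := fun i z =>
    cpd_comp (fun y => (C y).1) h1d (Tlin Γ) i z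
  have E2 : ∀ (k : Fin 3) (i : Fin 4) (z : CPt),
      cpd i (fun y => (C (ofPv (pmul Γ (toPv y)))).2 k) z =
        ∑ j, (ofPv (pmul Γ (toPv (Pi.single i 1)))) j *
          cpd j (fun y => (C y).2 k) (ofPv (pmul Γ (toPv z))) := fun k i z =>
    cpd_comp (fun y => (C y).2 k) (h2d k) (Tlin Γ) i z
  refine Prod.ext ?_ (funext fun j => ?_)
  · simp only [Dcm, cdiv3, cgrad3, ccurl3, Fin.sum_univ_three, E1, E2, Fin.sum_univ_four,
      sc0, sc1, sc2, Fin.succ_mk]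
    generalize ofPv (pmul Γ (toPv x)) = B
    simp only [pmul, revP, dot3, cross3, toPv, ofPv, Fin.sum_univ_three, sc0, sc1, sc2, Fin.succ_mk,
      consv1, consv2, consv3, Fin.cons_zero, Pi.single_apply, Pi.neg_apply]
    simp
    first
    | ring1
    | (simp only [Complex.I_sq]; ring1)
      | (ring_nf; simp only [Complex.I_sq]; ring1)
  · fin_cases j <;>
    · simp only [Dcm, cdiv3, cgrad3, ccurl3, Fin.sum_univ_three, E1, E2, Fin.sum_univ_four,
        sc0, sc1, sc2, Fin.succ_mk, Fin.isValue, Matrix.cons_val_zero, Matrix.cons_val_one, Matrix.head_cons,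
        Matrix.cons_val_two, Matrix.tail_cons]
      generalize ofPv (pmul Γ (toPv x)) = B
      simp only [pmul, revP, dot3, cross3, toPv, ofPv, Fin.sum_univ_three, sc0, sc1, sc2, Fin.succ_mk,
        consv1, consv2, consv3, Fin.cons_zero, Pi.single_apply, Pi.neg_apply,
        Matrix.cons_val_zero, Matrix.cons_val_one, Matrix.head_cons, Matrix.cons_val_two,
        Matrix.tail_cons]
      simp [Fin.succ_mk]
      first
      | ring1
      | (simp only [Complex.I_sq]; ring1)
      | (ring_nf; simp only [Complex.I_sq]; ring1)
end
end

section
/- Invariance of the d'Alembertian under orthogonal paravector substitution: let Λ = (α, 𝛃) be a paravector with det Λ = α² − 𝛃·𝛃 = 1, T_Λ : ℂ⁴ → ℂ⁴ the map X ↦ ΛX, and C : ℂ⁴ → ℂ × ℂ³ a twice (complex-)differentiable paravector field. Then □(C ∘ T_Λ) = (□C) ∘ T_Λ, where □ = ∂⁻∂ is the componentwise d'Alembertian ∂²/∂t² − Δ. -/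
noncomputable section
open scoped BigOperators

-- ## auxiliary lemmas

lemma cpd_add {f g : CPt → ℂ} {x : CPt} (hf : DifferentiableAt ℂ f x)
    (hg : DifferentiableAt ℂ g x) (i : Fin 4) :
    cpd i (fun y => f y + g y) x = cpd i f x + cpd i g x := by
  simp [cpd, fderiv_fun_add hf hg]

lemma cpd_sub {f g : CPt → ℂ} {x : CPt} (hf : DifferentiableAt ℂ f x)
    (hg : DifferentiableAt ℂ g x) (i : Fin 4) :
    cpd i (fun y => f y - g y) x = cpd i f x - cpd i g x := by
  simp [cpd, fderiv_fun_sub hf hg]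

lemma cpd_const_mul {f : CPt → ℂ} {x : CPt} (hf : DifferentiableAt ℂ f x) (c : ℂ) (i : Fin 4) :
    cpd i (fun y => c * f y) x = c * cpd i f x := by
  simp [cpd, fderiv_const_mul hf c]

lemma cpd_sum {f : Fin 3 → CPt → ℂ} {x : CPt} (hf : ∀ j, DifferentiableAt ℂ (f j) x) (i : Fin 4) :
    cpd i (fun y => ∑ j : Fin 3, f j y) x = ∑ j : Fin 3, cpd i (f j) x := by
  simp only [cpd]
  rw [fderiv_fun_sum (fun j _ => hf j), ContinuousLinearMap.sum_apply]

lemma contDiff_cpd {f : CPt → ℂ} (hf : ContDiff ℂ 2 f) (i : Fin 4) :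
    ContDiff ℂ 1 (cpd i f) := by
  have h1 : ContDiff ℂ 1 (fderiv ℂ f) := hf.fderiv_right (by norm_num)
  exact (ContinuousLinearMap.apply ℂ ℂ (Pi.single i (1:ℂ))).contDiff.comp h1

lemma diff_cpd {f : CPt → ℂ} (hf : ContDiff ℂ 2 f) (i : Fin 4) :
    Differentiable ℂ (cpd i f) :=
  (contDiff_cpd hf i).differentiable one_ne_zero

lemma cpd_comm {f : CPt → ℂ} (hf : ContDiff ℂ 2 f) (i j : Fin 4) (x : CPt) :
    cpd i (cpd j f) x = cpd j (cpd i f) x := by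
  have hs : IsSymmSndFDerivAt ℂ f x := hf.contDiffAt.isSymmSndFDerivAt (by simp)
  have hd : DifferentiableAt ℂ (fderiv ℂ f) x :=
    ((hf.fderiv_right (by norm_num)).differentiable one_ne_zero) x
  have key : ∀ a b : Fin 4, cpd a (cpd b f) x
      = fderiv ℂ (fderiv ℂ f) x (Pi.single a 1) (Pi.single b 1) := by
    intro a b
    have : cpd b f = fun y => (fderiv ℂ f y) (Pi.single b 1) := rfl
    rw [cpd, this, fderiv_clm_apply hd (differentiableAt_const _)]
    simp
  rw [key, key]
  exact hs _ _

-- ## the box operator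
def boxc (f : CPt → ℂ) (x : CPt) : ℂ :=
  cpd 0 (cpd 0 f) x - ∑ i : Fin 3, cpd i.succ (cpd i.succ f) x

-- ## the matrix of multiplication by Λ
def Mmat (Λ : Pv) : Matrix (Fin 4) (Fin 4) ℂ :=
  !![Λ.1, Λ.2 0, Λ.2 1, Λ.2 2;
     Λ.2 0, Λ.1, -Complex.I * Λ.2 2, Complex.I * Λ.2 1;
     Λ.2 1, Complex.I * Λ.2 2, Λ.1, -Complex.I * Λ.2 0;
     Λ.2 2, -Complex.I * Λ.2 1, Complex.I * Λ.2 0, Λ.1]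

def Tclm (Λ : Pv) : CPt →L[ℂ] CPt :=
  LinearMap.toContinuousLinearMap (Matrix.mulVecLin (Mmat Λ))

lemma ofPv_0 (A : Pv) : ofPv A 0 = A.1 := rfl
lemma ofPv_1 (A : Pv) : ofPv A 1 = A.2 0 := rfl
lemma ofPv_2 (A : Pv) : ofPv A 2 = A.2 1 := rfl
lemma ofPv_3 (A : Pv) : ofPv A 3 = A.2 2 := rfl
lemma fs0 : (0 : Fin 3).succ = (1 : Fin 4) := rfl
lemma fs1 : (1 : Fin 3).succ = (2 : Fin 4) := rfl
lemma fs2 : (2 : Fin 3).succ = (3 : Fin 4) := rfl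

lemma Mmat_00 (Λ : Pv) : Mmat Λ 0 0 = Λ.1 := rfl
lemma Mmat_01 (Λ : Pv) : Mmat Λ 0 1 = Λ.2 0 := rfl
lemma Mmat_02 (Λ : Pv) : Mmat Λ 0 2 = Λ.2 1 := rfl
lemma Mmat_03 (Λ : Pv) : Mmat Λ 0 3 = Λ.2 2 := rfl
lemma Mmat_10 (Λ : Pv) : Mmat Λ 1 0 = Λ.2 0 := rfl
lemma Mmat_11 (Λ : Pv) : Mmat Λ 1 1 = Λ.1 := rfl
lemma Mmat_12 (Λ : Pv) : Mmat Λ 1 2 = -Complex.I * Λ.2 2 := rfl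
lemma Mmat_13 (Λ : Pv) : Mmat Λ 1 3 = Complex.I * Λ.2 1 := rfl
lemma Mmat_20 (Λ : Pv) : Mmat Λ 2 0 = Λ.2 1 := rfl
lemma Mmat_21 (Λ : Pv) : Mmat Λ 2 1 = Complex.I * Λ.2 2 := rfl
lemma Mmat_22 (Λ : Pv) : Mmat Λ 2 2 = Λ.1 := rfl
lemma Mmat_23 (Λ : Pv) : Mmat Λ 2 3 = -Complex.I * Λ.2 0 := rfl
lemma Mmat_30 (Λ : Pv) : Mmat Λ 3 0 = Λ.2 2 := rfl
lemma Mmat_31 (Λ : Pv) : Mmat Λ 3 1 = -Complex.I * Λ.2 1 := rfl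
lemma Mmat_32 (Λ : Pv) : Mmat Λ 3 2 = Complex.I * Λ.2 0 := rfl
lemma Mmat_33 (Λ : Pv) : Mmat Λ 3 3 = Λ.1 := rfl

lemma Tfun_eq (Λ : Pv) (z : CPt) : ofPv (pmul Λ (toPv z)) = Tclm Λ z := by
  funext i
  fin_cases i <;>
    simp [Tclm, Mmat, ofPv_0, ofPv_1, ofPv_2, ofPv_3, pmul, toPv, dot3, cross3,
      Matrix.mulVec, dotProduct, Matrix.vecHead, Matrix.vecTail, fs0, fs1, fs2,
      Fin.sum_univ_four, Fin.sum_univ_three] <;> ring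

lemma clm_apply_sum (L : CPt →L[ℂ] ℂ) (v : CPt) : L v = ∑ k, v k * L (Pi.single k 1) := by
  have hv : v = ∑ k : Fin 4, v k • (Pi.single k 1 : CPt) := by
    funext j
    simp [Pi.single_apply]
  conv_lhs => rw [hv]
  rw [map_sum]
  simp

lemma Tclm_single (Λ : Pv) (i : Fin 4) (k : Fin 4) :
    Tclm Λ (Pi.single i 1) k = Mmat Λ k i := by
  simp [Tclm, Matrix.mulVec_single]

lemma cpd_T {Λ : Pv} {f : CPt → ℂ} (hf : Differentiable ℂ f) (i : Fin 4) (x : CPt) :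
    cpd i (fun z => f (Tclm Λ z)) x = ∑ k, Mmat Λ k i * cpd k f (Tclm Λ x) := by
  have hT : DifferentiableAt ℂ (⇑(Tclm Λ)) x := (Tclm Λ).differentiableAt
  have hcomp : fderiv ℂ (fun z => f (Tclm Λ z)) x
      = (fderiv ℂ f (Tclm Λ x)).comp (Tclm Λ) := by
    rw [show (fun z => f (Tclm Λ z)) = f ∘ ⇑(Tclm Λ) from rfl,
      fderiv_comp x (hf _) hT, (Tclm Λ).fderiv]
  rw [cpd, hcomp]
  simp only [ContinuousLinearMap.coe_comp', Function.comp_apply]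
  rw [clm_apply_sum (fderiv ℂ f (Tclm Λ x)) (Tclm Λ (Pi.single i 1))]
  exact Finset.sum_congr rfl fun k _ => by rw [Tclm_single]; rfl

lemma cpd_sum4 {f : Fin 4 → CPt → ℂ} {x : CPt} (hf : ∀ j, DifferentiableAt ℂ (f j) x)
    (i : Fin 4) :
    cpd i (fun y => ∑ j : Fin 4, f j y) x = ∑ j : Fin 4, cpd i (f j) x := by
  simp only [cpd]
  rw [fderiv_fun_sum (fun j _ => hf j), ContinuousLinearMap.sum_apply]

lemma cpd2_T {Λ : Pv} {f : CPt → ℂ} (hf : ContDiff ℂ 2 f) (i j : Fin 4) (x : CPt) :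
    cpd j (cpd i (fun z => f (Tclm Λ z))) x
      = ∑ k, ∑ l, Mmat Λ k i * Mmat Λ l j * cpd l (cpd k f) (Tclm Λ x) := by
  have hdf : Differentiable ℂ f := hf.differentiable two_ne_zero
  have h1 : cpd i (fun z => f (Tclm Λ z)) = fun y => ∑ k, Mmat Λ k i * cpd k f (Tclm Λ y) :=
    funext fun y => cpd_T hdf i y
  have hdk : ∀ k, DifferentiableAt ℂ (fun y => cpd k f (Tclm Λ y)) x := fun k =>
    ((diff_cpd hf k) (Tclm Λ x)).comp x (Tclm Λ).differentiableAt
  rw [h1, cpd_sum4 (fun k => (hdk k).const_mul _) j]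
  refine Finset.sum_congr rfl fun k _ => ?_
  rw [cpd_const_mul (hdk k), cpd_T (diff_cpd hf k) j x, Finset.mul_sum]
  exact Finset.sum_congr rfl fun l _ => by ring

lemma boxc_T {Λ : Pv} (hΛ : detP Λ = 1) {f : CPt → ℂ} (hf : ContDiff ℂ 2 f) (x : CPt) :
    boxc (fun z => f (Tclm Λ z)) x = boxc f (Tclm Λ x) := by
  have h' : Λ.1 ^ 2 - (Λ.2 0 * Λ.2 0 + Λ.2 1 * Λ.2 1 + Λ.2 2 * Λ.2 2) = 1 := by
    simpa [detP, dot3, Fin.sum_univ_three] using hΛ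
  simp only [boxc, cpd2_T hf, Fin.sum_univ_three, Fin.sum_univ_four, fs0, fs1, fs2, Mmat_00, Mmat_01, Mmat_02, Mmat_03, Mmat_10, Mmat_11, Mmat_12, Mmat_13, Mmat_20, Mmat_21, Mmat_22, Mmat_23, Mmat_30, Mmat_31, Mmat_32, Mmat_33]
  ring_nf
  simp only [Complex.I_sq]
  linear_combination (cpd 0 (cpd 0 f) (Tclm Λ x) - cpd 1 (cpd 1 f) (Tclm Λ x)
    - cpd 2 (cpd 2 f) (Tclm Λ x) - cpd 3 (cpd 3 f) (Tclm Λ x)) * h'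

attribute [fun_prop] diff_cpd

lemma ccurl3_0 (Φ : CPt → Vec3) (x : CPt) :
    ccurl3 Φ x 0 = cpd 2 (fun y => Φ y 2) x - cpd 3 (fun y => Φ y 1) x := rfl
lemma ccurl3_1 (Φ : CPt → Vec3) (x : CPt) :
    ccurl3 Φ x 1 = cpd 3 (fun y => Φ y 0) x - cpd 1 (fun y => Φ y 2) x := rfl
lemma ccurl3_2 (Φ : CPt → Vec3) (x : CPt) :
    ccurl3 Φ x 2 = cpd 1 (fun y => Φ y 1) x - cpd 2 (fun y => Φ y 0) x := rfl

lemma dcm_dc (φ : CPt → ℂ) (Φ : CPt → Vec3) (hφ : ContDiff ℂ 2 φ)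
    (hΦ : ∀ j : Fin 3, ContDiff ℂ 2 (fun y => Φ y j)) (x : CPt) :
    Dcm (fun y => Dc (fun z => (φ z, Φ z)) y) x
      = (boxc φ x, fun j => boxc (fun y => Φ y j) x) := by
  have hΦ0 := hΦ 0; have hΦ1 := hΦ 1; have hΦ2 := hΦ 2
  refine Prod.ext ?_ (funext fun j => ?_)
  · show cpd 0 _ x - cdiv3 _ x = _
    simp only [Dc, cdiv3, cgrad3, boxc, Fin.sum_univ_three, fs0, fs1, fs2,
      ccurl3_0, ccurl3_1, ccurl3_2]
    simp (disch := fun_prop) only [cpd_add, cpd_sub, cpd_const_mul]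
    simp only [cpd_comm hφ 1 0 x, cpd_comm hφ 2 0 x, cpd_comm hφ 3 0 x, cpd_comm hφ 2 1 x, cpd_comm hφ 3 1 x, cpd_comm hφ 3 2 x, cpd_comm hΦ0 1 0 x, cpd_comm hΦ0 2 0 x, cpd_comm hΦ0 3 0 x, cpd_comm hΦ0 2 1 x, cpd_comm hΦ0 3 1 x, cpd_comm hΦ0 3 2 x, cpd_comm hΦ1 1 0 x, cpd_comm hΦ1 2 0 x, cpd_comm hΦ1 3 0 x, cpd_comm hΦ1 2 1 x, cpd_comm hΦ1 3 1 x, cpd_comm hΦ1 3 2 x, cpd_comm hΦ2 1 0 x, cpd_comm hΦ2 2 0 x, cpd_comm hΦ2 3 0 x, cpd_comm hΦ2 2 1 x, cpd_comm hΦ2 3 1 x, cpd_comm hΦ2 3 2 x]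
    ring
  · fin_cases j
    all_goals
      simp only [Fin.zero_eta, Fin.mk_one, Fin.reduceFinMk, id_eq]
      show cpd 0 _ x - cgrad3 _ x _ - Complex.I * ccurl3 _ x _ = _
      simp only [Dc, cdiv3, cgrad3, boxc, Fin.sum_univ_three, fs0, fs1, fs2,
        ccurl3_0, ccurl3_1, ccurl3_2]
      simp (disch := fun_prop) only [cpd_add, cpd_sub, cpd_const_mul]
      simp only [cpd_comm hφ 1 0 x, cpd_comm hφ 2 0 x, cpd_comm hφ 3 0 x, cpd_comm hφ 2 1 x, cpd_comm hφ 3 1 x, cpd_comm hφ 3 2 x, cpd_comm hΦ0 1 0 x, cpd_comm hΦ0 2 0 x, cpd_comm hΦ0 3 0 x, cpd_comm hΦ0 2 1 x, cpd_comm hΦ0 3 1 x, cpd_comm hΦ0 3 2 x, cpd_comm hΦ1 1 0 x, cpd_comm hΦ1 2 0 x, cpd_comm hΦ1 3 0 x, cpd_comm hΦ1 2 1 x, cpd_comm hΦ1 3 1 x, cpd_comm hΦ1 3 2 x, cpd_comm hΦ2 1 0 x, cpd_comm hΦ2 2 0 x, cpd_comm hΦ2 3 0 x, cpd_comm hΦ2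 2 1 x, cpd_comm hΦ2 3 1 x, cpd_comm hΦ2 3 2 x]
      first
      | ring1
      | (ring_nf; simp only [Complex.I_sq]; ring1)

theorem box_invariant (Λ : Pv) (hΛ : detP Λ = 1) (C : CPt → Pv) (hC : ContDiff ℂ 2 C) :
    ∀ x : CPt,
      Dcm (fun y => Dc (fun z => C (ofPv (pmul Λ (toPv z)))) y) x =
        Dcm (fun y => Dc C y) (ofPv (pmul Λ (toPv x))) := by
  intro x
  have hφ : ContDiff ℂ 2 (fun y => (C y).1) := contDiff_fst.comp hC
  have hΦ : ∀ j : Fin 3, ContDiff ℂ 2 (fun y => (C y).2 j) := fun j =>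
    (contDiff_pi.mp (contDiff_snd.comp hC)) j
  have hCeq : (fun z => C (ofPv (pmul Λ (toPv z))))
      = fun z => ((C (Tclm Λ z)).1, (C (Tclm Λ z)).2) := funext fun z => by rw [Tfun_eq]
  rw [hCeq, Tfun_eq Λ x]
  have hφT : ContDiff ℂ 2 (fun z => (C (Tclm Λ z)).1) := hφ.comp (Tclm Λ).contDiff
  have hΦT : ∀ j : Fin 3, ContDiff ℂ 2 (fun z => (C (Tclm Λ z)).2 j) := fun j =>
    (hΦ j).comp (Tclm Λ).contDiff
  rw [dcm_dc _ _ hφT hΦT x,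
    show Dcm (fun y => Dc C y) (Tclm Λ x) = _ from
      dcm_dc (fun y => (C y).1) (fun y => (C y).2) hφ hΦ (Tclm Λ x)]
  refine Prod.ext ?_ (funext fun j => ?_)
  · exact boxc_T hΛ hφ x
  · exact boxc_T hΛ (hΦ j) x
end
end
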